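/- arXiv:1701.03073 — 6 statements merged into one kernel-verified Lean document; each statement's English description precedes it below -/
import Mathlib

section
/- Let (X,p,E) be a lattice-normed space. If every p-Cauchy sequence in X is p-convergent (i.e., X is sequentially p-complete), then X is rp-complete, i.e., every rp-Cauchy sequence in X is rp-convergent. -/
open Filter Topology

/-- Directedness of a relation. -/
def DirRel {ι : Type*} (r : ι → ι → Prop) : Prop := ∀ a b : ι, ∃ c, r a c ∧ r b c

/-- Order convergence of a net `x` (indexed by `ι`, ordered by `r`) to `l` in `E`:
there is a net `z` decreasing to `0` eventually dominating `|x · - l|`. -/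
def OConv {ι E : Type*} [Lattice E] [AddCommGroup E]
    (r : ι → ι → Prop) (x : ι → E) (l : E) : Prop :=
  ∃ (κ : Type) (s : κ → κ → Prop) (z : κ → E),
    Nonempty κ ∧ DirRel s ∧
    (∀ b₁ b₂ : κ, s b₁ b₂ → z b₂ ≤ z b₁) ∧
    (∀ b, 0 ≤ z b) ∧
    (∀ e : E, (∀ b, e ≤ z b) → e ≤ 0) ∧
    (∀ b, ∃ a₀, ∀ a, r a₀ a → |x a - l| ≤ z b)

/-- Order convergence of a sequence. -/
def OConvSeq {E : Type*} [Lattice E] [AddCommGroup E] (x : ℕ → E) (l : E) : Prop :=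
  OConv (· ≤ · : ℕ → ℕ → Prop) x l

/-- `p : X → E` is a vector norm (lattice norm) into the positive cone of `E`. -/
structure IsVectorNorm {X E : Type*} [AddCommGroup X] [Module ℝ X]
    [Lattice E] [AddCommGroup E] [Module ℝ E] (p : X → E) : Prop where
  nonneg : ∀ x, 0 ≤ p x
  eq_zero_iff : ∀ x, p x = 0 ↔ x = 0
  smul_eq : ∀ (r : ℝ) (x : X), p (r • x) = |r| • p x
  add_le : ∀ x y, p (x + y) ≤ p x + p y

/-- Monotonicity of the lattice norm: the LNVL condition. -/
def IsMonotoneVN {X E : Type*} [Lattice X] [AddCommGroup X] [Lattice E] [AddCommGroup E]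
    (p : X → E) : Prop := ∀ x y : X, |x| ≤ |y| → p x ≤ p y

/-- A sequentially p-complete LNS is rp-complete. -/
theorem stmt_0 {X E : Type*} [AddCommGroup X] [Module ℝ X]
    [Lattice E] [AddCommGroup E] [Module ℝ E]
    [CovariantClass E E (· + ·) (· ≤ ·)]
    (harch : ∀ x y : E, (∀ n : ℕ, (n : ℝ) • x ≤ y) → x ≤ 0)
    (p : X → E) (hp : IsVectorNorm p)
    -- sequential p-completeness: every p-Cauchy sequence p-converges
    (hcomp : ∀ x : ℕ → X,
      OConv (fun a b : ℕ × ℕ => a.1 ≤ b.1 ∧ a.2 ≤ b.2)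
        (fun q => p (x q.1 - x q.2)) 0 →
      ∃ l : X, OConvSeq (fun n => p (x n - l)) 0) :
    -- rp-completeness: every rp-Cauchy sequence rp-converges
    ∀ x : ℕ → X,
      (∃ e : E, 0 ≤ e ∧ ∀ ε : ℝ, 0 < ε → ∃ N : ℕ, ∀ m n : ℕ, N ≤ m → N ≤ n →
        p (x m - x n) ≤ ε • e) →
      ∃ (l : X) (e : E), 0 ≤ e ∧ ∀ ε : ℝ, 0 < ε → ∃ N : ℕ, ∀ n : ℕ, N ≤ n →
        p (x n - l) ≤ ε • e := by
  rintro x ⟨e, he0, hC⟩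
  have hp0 : p 0 = 0 := (hp.eq_zero_iff 0).mpr rfl
  have hpos : ∀ t : ℝ, 0 < t → 0 ≤ t • e := by
    intro t ht
    obtain ⟨N, hN⟩ := hC t ht
    have h := hN N N le_rfl le_rfl
    simpa [hp0] using h
  have hmono : ∀ t₁ t₂ : ℝ, t₁ ≤ t₂ → t₁ • e ≤ t₂ • e := by
    intro t₁ t₂ h
    rcases h.lt_or_eq with h | h
    · have h0 : 0 ≤ (t₂ - t₁) • e := hpos _ (by linarith)
      have h2 := add_le_add_right h0 (t₁ • e)
      calc t₁ • e = 0 + t₁ • e := (zero_add _).symm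
        _ ≤ (t₂ - t₁) • e + t₁ • e := by rw [add_comm 0, add_comm _ (t₁ • e)]; exact h2
        _ = t₂ • e := by rw [← add_smul]; ring_nf
    · rw [h]
  have hcauchy : OConv (fun a b : ℕ × ℕ => a.1 ≤ b.1 ∧ a.2 ≤ b.2)
      (fun q => p (x q.1 - x q.2)) 0 := by
    refine ⟨ℕ, (· ≤ ·), fun b => (1 / (b + 1 : ℝ)) • e, ⟨0⟩,
      fun a b => ⟨max a b, le_max_left _ _, le_max_right _ _⟩, ?_, ?_, ?_, ?_⟩
    · intro b₁ b₂ hb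
      apply hmono
      apply one_div_le_one_div_of_le
      · positivity
      · have : (b₁ : ℝ) ≤ b₂ := Nat.cast_le.mpr hb
        linarith
    · intro b
      exact hpos _ (by positivity)
    · intro f hf
      apply harch f e
      intro n
      have h1 : f ≤ (1 / (n + 1 : ℝ)) • e := hf n
      have h2 : n • f ≤ n • ((1 / (n + 1 : ℝ)) • e) := nsmul_le_nsmul_right h1 n
      have h3 : (n : ℝ) • f = n • f := Nat.cast_smul_eq_nsmul ℝ n f
      have h4 : n • ((1 / (n + 1 : ℝ)) • e) = ((n : ℝ) * (1 / (n + 1 : ℝ))) • e := by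
        rw [← Nat.cast_smul_eq_nsmul ℝ n, smul_smul]
      have h5 : ((n : ℝ) * (1 / (n + 1 : ℝ))) • e ≤ e := by
        have := hmono ((n : ℝ) * (1 / (n + 1 : ℝ))) 1 (by
          rw [mul_one_div, div_le_one (by positivity)]; linarith)
        simpa using this
      rw [h3]
      exact h2.trans (h4 ▸ h5)
    · intro b
      obtain ⟨N, hN⟩ := hC (1 / (b + 1 : ℝ)) (by positivity)
      refine ⟨(N, N), fun a ha => ?_⟩
      simpa [abs_of_nonneg (hp.nonneg _)] using hN a.1 a.2 ha.1 ha.2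
  obtain ⟨l, κ, s, z, hne, hdir, hdec, hz0, hinf, hdom⟩ := hcomp x hcauchy
  refine ⟨l, e, he0, ?_⟩
  intro ε hε
  obtain ⟨N, hN⟩ := hC ε hε
  refine ⟨N, fun n hn => ?_⟩
  have key : ∀ b, p (x n - l) - ε • e ≤ z b := by
    intro b
    obtain ⟨m₀, hm₀⟩ := hdom b
    set m := max m₀ N with hm
    have h1 : p (x n - l) ≤ p (x n - x m) + p (x m - l) := by
      have := hp.add_le (x n - x m) (x m - l)
      simpa using this
    have h2 := hN n m hn (le_max_right _ _)
    have h3 : p (x m - l) ≤ z b := by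
      simpa [abs_of_nonneg (hp.nonneg _)] using hm₀ m (le_max_left _ _)
    have h4 : p (x n - l) ≤ ε • e + z b := h1.trans (add_le_add h2 h3)
    rw [sub_le_iff_le_add, add_comm]
    exact h4
  exact sub_nonpos.mp (hinf _ key)
end

section
/- Let (X,p,E) be an LNVL with E a Banach lattice and (Y,m,F) an LNS with F a σ-order continuous normed lattice. If T: X → Y is sequentially p-continuous (xₙ p-converges to 0 implies Txₙ p-converges to 0), then T is continuous with respect to the mixed norms: ‖p(xₙ)‖_E → 0 implies ‖m(Txₙ)‖_F → 0. -/
open Filter Topology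

lemma oconvSeq_of_norm_le_geom {E : Type*} [NormedAddCommGroup E] [Lattice E] [HasSolidNorm E] [IsOrderedAddMonoid E]
    [NormedSpace ℝ E] [CompleteSpace E]
    (g : ℕ → E) (hg : ∀ n, ‖g n‖ ≤ (1/2:ℝ)^n) : OConvSeq g 0 := by
  have hgeo : ∀ b : ℕ, Summable (fun k => (1/2:ℝ)^(b+k)) := fun b => by
    simpa [pow_add] using (summable_geometric_two).mul_left ((1/2:ℝ)^b)
  have hsum : ∀ b, Summable (fun k => |g (b + k)|) := by
    intro b
    apply Summable.of_norm_bounded (hgeo b)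
    intro k; rw [norm_abs_eq_norm]; exact hg _
  have hgeoval : ∀ b : ℕ, (∑' k, (1/2:ℝ)^(b+k)) = 2 * (1/2)^b := by
    intro b
    rw [show (fun k => (1/2:ℝ)^(b+k)) = fun k => (1/2:ℝ)^b * (1/2:ℝ)^k from
      funext fun k => by rw [pow_add]]
    rw [tsum_mul_left, tsum_geometric_two]; ring
  set z : ℕ → E := fun b => ∑' k, |g (b + k)| with hz
  have hnorm : ∀ b, ‖z b‖ ≤ 2 * (1/2:ℝ)^b := by
    intro b
    rw [← hgeoval b]
    exact tsum_of_norm_bounded (hgeo b).hasSum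
      (fun k => by rw [norm_abs_eq_norm]; exact hg _)
  have hzpos : ∀ b, 0 ≤ z b := fun b => tsum_nonneg fun k => abs_nonneg _
  refine ⟨ℕ, (· ≤ ·), z, ⟨0⟩, fun a b => ⟨max a b, le_max_left _ _, le_max_right _ _⟩,
    ?_, hzpos, ?_, ?_⟩
  · -- antitone
    intro b₁ b₂ hb
    obtain ⟨d, rfl⟩ := Nat.exists_eq_add_of_le hb
    have key := Summable.sum_add_tsum_nat_add (f := fun k => |g (b₁ + k)|) d (hsum b₁)
    show ∑' k, |g (b₁ + d + k)| ≤ ∑' k, |g (b₁ + k)|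
    rw [show (fun k => |g (b₁ + d + k)|) = fun k => |g (b₁ + (k + d))| from
      funext fun k => by ring_nf, ← key]
    exact le_add_of_nonneg_left (Finset.sum_nonneg fun i _ => abs_nonneg _)
  · -- infimum is ≤ 0
    intro e he
    have h1 : ∀ b, e⁺ ≤ z b := fun b => by rw [posPart_def]; exact sup_le (he b) (hzpos b)
    have h2 : ∀ b, ‖e⁺‖ ≤ 2 * (1/2:ℝ)^b := by
      intro b
      refine le_trans (HasSolidNorm.solid ?_) (hnorm b)
      rw [abs_of_nonneg (posPart_nonneg e), abs_of_nonneg (hzpos b)]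
      exact h1 b
    have h3 : ‖e⁺‖ ≤ 0 := by
      have htend : Tendsto (fun b : ℕ => 2 * (1/2:ℝ)^b) atTop (𝓝 0) := by
        simpa using (tendsto_pow_atTop_nhds_zero_of_lt_one (by norm_num) (by norm_num :
          (1/2:ℝ) < 1)).const_mul 2
      exact ge_of_tendsto' htend h2
    have : e⁺ = 0 := by
      rw [← norm_eq_zero]; exact le_antisymm h3 (norm_nonneg _)
    rwa [posPart_eq_zero] at this
  · -- domination
    intro b
    refine ⟨b, fun a ha => ?_⟩
    rw [sub_zero]
    have := Summable.le_tsum (hsum b) (a - b) (fun j _ => abs_nonneg _)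
    rwa [Nat.add_sub_cancel' ha] at this

/-- A sequentially p-continuous operator between suitable lattice-normed
spaces is continuous for the mixed norms. -/
theorem stmt_5 {X E Y F : Type*} [Lattice X] [AddCommGroup X] [Module ℝ X]
    [NormedAddCommGroup E] [Lattice E] [HasSolidNorm E] [IsOrderedAddMonoid E] [NormedSpace ℝ E] [CompleteSpace E]
    [AddCommGroup Y] [Module ℝ Y]
    [NormedAddCommGroup F] [Lattice F] [HasSolidNorm F] [IsOrderedAddMonoid F] [NormedSpace ℝ F]
    (p : X → E) (hp : IsVectorNorm p) (hpmono : IsMonotoneVN p)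
    (m : Y → F) (hm : IsVectorNorm m)
    -- F is σ-order continuous
    (hF : ∀ f : ℕ → F, OConvSeq f 0 → Tendsto (fun n => ‖f n‖) atTop (𝓝 0))
    (T : X →ₗ[ℝ] Y)
    -- T is sequentially p-continuous
    (hT : ∀ x : ℕ → X, OConvSeq (fun n => p (x n)) 0 →
      OConvSeq (fun n => m (T (x n))) 0) :
    ∀ x : ℕ → X, Tendsto (fun n => ‖p (x n)‖) atTop (𝓝 0) →
      Tendsto (fun n => ‖m (T (x n))‖) atTop (𝓝 0) := by
  intro x hx
  by_contra hcon
  rw [Metric.tendsto_atTop] at hcon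
  push_neg at hcon
  obtain ⟨ε, hε, hfreq⟩ := hcon
  have hfr : ∃ᶠ n in atTop, ε ≤ ‖m (T (x n))‖ := by
    rw [frequently_atTop]
    intro N
    obtain ⟨n, hn, h⟩ := hfreq N
    exact ⟨n, hn, by simpa [Real.dist_eq, abs_of_nonneg (norm_nonneg _)] using h⟩
  obtain ⟨φ, hφ, hφε⟩ := extraction_of_frequently_atTop hfr
  have hx' : Tendsto (fun n => ‖p (x (φ n))‖) atTop (𝓝 0) := hx.comp hφ.tendsto_atTop
  have hev : ∀ n : ℕ, ∃ N, ∀ k ≥ N, ‖p (x (φ k))‖ ≤ (1/2:ℝ)^n := by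
    intro n
    obtain ⟨N, hN⟩ := Metric.tendsto_atTop.1 hx' ((1/2:ℝ)^n) (by positivity)
    exact ⟨N, fun k hk => by
      have := hN k hk
      rw [Real.dist_eq, sub_zero, abs_of_nonneg (norm_nonneg _)] at this
      exact this.le⟩
  obtain ⟨ψ, hψ, hψle⟩ := extraction_forall_of_eventually' hev
  have ho : OConvSeq (fun n => p (x (φ (ψ n)))) 0 :=
    oconvSeq_of_norm_le_geom _ (fun n => hψle n)
  have hlim := hF _ (hT (fun n => x (φ (ψ n))) ho)
  have : ε ≤ 0 := ge_of_tendsto' hlim (fun n => hφε (ψ n))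
  linarith
end

section
/- Let X be a normed lattice, Y a normed space, E = ℝ^{X*} (with pointwise order), and define p: X → E₊ by p(x)[f] = |f|(|x|) for f ∈ X*. If T: X → Y is a Dunford–Pettis operator (xₙ → 0 weakly implies ‖Txₙ‖_Y → 0), then T is sequentially p-continuous from (X,p,E) to (Y,‖·‖_Y,ℝ): p(xₙ) order-converges to 0 in E implies ‖Txₙ‖_Y → 0. -/
open Filter Topology

/-- `p(x)[f] = |f|(|x|)`, using the Riesz–Kantorovich formula
`|f|(|x|) = sup { f y : |y| ≤ |x| }`. -/
noncomputable def pE {X : Type*} [NormedAddCommGroup X] [Lattice X] [HasSolidNorm X] [IsOrderedAddMonoid X] [NormedSpace ℝ X]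
    (x : X) : (X →L[ℝ] ℝ) → ℝ :=
  fun f => sSup ((fun y => f y) '' {y : X | |y| ≤ |x|})


lemma abs_apply_le_pE {X : Type*} [NormedAddCommGroup X] [Lattice X] [HasSolidNorm X] [IsOrderedAddMonoid X] [NormedSpace ℝ X]
    (f : X →L[ℝ] ℝ) (x : X) : |f x| ≤ pE x f := by
  have hbdd : BddAbove ((fun y => f y) '' {y : X | |y| ≤ |x|}) := by
    refine ⟨‖f‖ * ‖x‖, ?_⟩
    rintro t ⟨y, hy, rfl⟩
    have h1 : ‖y‖ ≤ ‖x‖ := by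
      have h := HasSolidNorm.solid (le_trans hy (le_of_eq (abs_abs x).symm))
      rwa [norm_abs_eq_norm] at h
    calc f y ≤ |f y| := le_abs_self _
      _ ≤ ‖f‖ * ‖y‖ := by simpa using f.le_opNorm y
      _ ≤ ‖f‖ * ‖x‖ := by exact mul_le_mul_of_nonneg_left h1 (norm_nonneg f)
  have hmem : ∀ y : X, |y| ≤ |x| → f y ≤ pE x f := fun y hy =>
    le_csSup hbdd ⟨y, hy, rfl⟩
  rcases abs_cases (f x) with ⟨h, _⟩ | ⟨h, _⟩
  · rw [h]; exact hmem x le_rfl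
  · rw [h]
    have := hmem (-x) (by simp)
    simpa using this

/-- A Dunford–Pettis operator is sequentially p-continuous from
`(X,p,ℝ^{X*})` to `(Y,‖·‖,ℝ)`. -/
theorem stmt_7 {X Y : Type*} [NormedAddCommGroup X] [Lattice X] [HasSolidNorm X] [IsOrderedAddMonoid X] [NormedSpace ℝ X]
    [NormedAddCommGroup Y] [NormedSpace ℝ Y]
    (T : X →ₗ[ℝ] Y)
    -- T is Dunford–Pettis
    (hDP : ∀ x : ℕ → X,
      (∀ f : X →L[ℝ] ℝ, Tendsto (fun n => f (x n)) atTop (𝓝 0)) →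
      Tendsto (fun n => ‖T (x n)‖) atTop (𝓝 0)) :
    -- T is sequentially p-continuous
    ∀ x : ℕ → X, OConvSeq (fun n => pE (x n)) (0 : (X →L[ℝ] ℝ) → ℝ) →
      Tendsto (fun n => ‖T (x n)‖) atTop (𝓝 0) := by
  intro x hx
  apply hDP
  intro f
  obtain ⟨κ, s, z, ⟨b0⟩, hdir, hmono, hpos, hinf, hdom⟩ := hx
  rw [Metric.tendsto_atTop]
  intro ε hε
  have key : ∃ b, z b f < ε := by
    by_contra h
    push_neg at h
    set e : (X →L[ℝ] ℝ) → ℝ := fun g => sInf (Set.range fun b => z b g) with he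
    have hele : ∀ b, e ≤ z b := by
      intro b g
      exact csInf_le ⟨0, by rintro t ⟨b', rfl⟩; exact hpos b' g⟩ ⟨b, rfl⟩
    have := abs_nonneg (0:ℝ)
    have h2 : e ≤ 0 := hinf e hele
    have h3 : ε ≤ e f := le_csInf ⟨z b0 f, b0, rfl⟩ (by rintro t ⟨b, rfl⟩; exact h b)
    have h4 : ε ≤ (0:ℝ) := by simpa using le_trans h3 (h2 f)
    linarith
  obtain ⟨b, hb⟩ := key
  obtain ⟨a₀, ha⟩ := hdom b
  refine ⟨a₀, fun n hn => ?_⟩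
  have h1 : |pE (x n) f| ≤ z b f := by
    have := ha n hn f
    simpa using this
  have h2 : |f (x n)| ≤ pE (x n) f := abs_apply_le_pE f (x n)
  have : dist (f (x n)) 0 = |f (x n)| := by simp [Real.dist_eq]
  rw [this]
  calc |f (x n)| ≤ pE (x n) f := h2
    _ ≤ |pE (x n) f| := le_abs_self _
    _ ≤ z b f := h1
    _ < ε := hb
end

section
/- Let X be a normed lattice with weakly sequentially continuous lattice operations, Y a normed space, E = ℝ^{X*}, and p(x)[f] = |f|(|x|). If T: X → Y is sequentially p-continuous from (X,p,E) to (Y,‖·‖_Y,ℝ), then T is Dunford–Pettis: xₙ → 0 weakly implies ‖Txₙ‖_Y → 0. -/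
open Filter Topology

section aux
variable {X : Type*} [NormedAddCommGroup X] [Lattice X] [HasSolidNorm X] [IsOrderedAddMonoid X] [NormedSpace ℝ X] (f : X →L[ℝ] ℝ)

noncomputable def Sabs (u : X) : ℝ := sSup ((fun y => f y) '' {y : X | |y| ≤ u})

lemma Sabs_bdd (u : X) : BddAbove ((fun y => f y) '' {y : X | |y| ≤ u}) := by
  refine ⟨‖f‖ * ‖u‖, ?_⟩
  rintro a ⟨y, hy, rfl⟩
  have hy' : |y| ≤ |u| := hy.trans (le_abs_self u)
  have : ‖y‖ ≤ ‖u‖ := HasSolidNorm.solid hy'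
  calc f y ≤ |f y| := le_abs_self _
    _ ≤ ‖f‖ * ‖y‖ := f.le_opNorm y
    _ ≤ ‖f‖ * ‖u‖ := mul_le_mul_of_nonneg_left this (norm_nonneg f)

lemma le_Sabs {u y : X} (hy : |y| ≤ u) : f y ≤ Sabs f u :=
  le_csSup (Sabs_bdd f u) ⟨y, hy, rfl⟩

lemma Sabs_nonneg {u : X} (hu : 0 ≤ u) : 0 ≤ Sabs f u := by
  have h0 : |(0 : X)| ≤ u := by simpa using hu
  simpa using le_Sabs f h0

lemma Sabs_mono {u w : X} (hu : 0 ≤ u) (huw : u ≤ w) : Sabs f u ≤ Sabs f w := by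
  have h0 : |(0 : X)| ≤ u := by simpa using hu
  refine csSup_le_csSup (Sabs_bdd f w) ⟨f 0, ⟨0, h0, rfl⟩⟩ ?_
  rintro a ⟨y, hy, rfl⟩
  exact ⟨y, hy.trans huw, rfl⟩

lemma Sabs_le {u : X} (hu : 0 ≤ u) : Sabs f u ≤ ‖f‖ * ‖u‖ := by
  apply Real.sSup_le
  · rintro a ⟨y, hy, rfl⟩
    have hy' : |y| ≤ |u| := hy.trans (le_abs_self u)
    calc f y ≤ |f y| := le_abs_self _
      _ ≤ ‖f‖ * ‖y‖ := f.le_opNorm y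
      _ ≤ ‖f‖ * ‖u‖ := mul_le_mul_of_nonneg_left (HasSolidNorm.solid hy') (norm_nonneg f)
  · positivity

lemma riesz_decomp {y u v : X} (hu : 0 ≤ u) (hv : 0 ≤ v) (h : |y| ≤ u + v) :
    ∃ y₁ y₂, y = y₁ + y₂ ∧ |y₁| ≤ u ∧ |y₂| ≤ v := by
  set y₁ := (y ⊓ u) ⊔ (-u) with hy₁
  refine ⟨y₁, y - y₁, by abel, ?_, ?_⟩
  · rw [abs_le']
    constructor
    · exact sup_le (inf_le_right) (neg_le_self hu)
    · rw [neg_le]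
      exact le_sup_right
  · rw [abs_le']
    constructor
    · rw [sub_le_comm]
      refine le_sup_of_le_left (le_inf (sub_le_self y hv) ?_)
      have h2 : y ≤ u + v := (le_abs_self y).trans h
      exact sub_le_iff_le_add.2 h2
    · -- -(y - y₁) ≤ v ↔ -v ≤ y - y₁ ↔ y₁ ≤ y + v
      rw [neg_sub, sub_le_iff_le_add]
      refine sup_le (inf_le_left.trans (le_add_of_nonneg_left hv)) ?_
      have hny : -|y| ≤ y := by
        have h4 : -y ≤ |y| := neg_le_abs y
        simpa using neg_le_neg h4
      have h1 : -(u + v) ≤ y := (neg_le_neg h).trans hny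
      have h3 : -u - v ≤ y := by rw [sub_eq_add_neg, ← neg_add]; exact h1
      have := sub_le_iff_le_add.1 h3
      -- -u ≤ y + v, need -u ≤ v + y
      rwa [add_comm] at this

lemma Sabs_add {u v : X} (hu : 0 ≤ u) (hv : 0 ≤ v) :
    Sabs f (u + v) = Sabs f u + Sabs f v := by
  have huv : 0 ≤ u + v := add_nonneg hu hv
  apply le_antisymm
  · apply Real.sSup_le
    · rintro a ⟨y, hy, rfl⟩
      obtain ⟨y₁, y₂, rfl, h1, h2⟩ := riesz_decomp hu hv hy
      show f (y₁ + y₂) ≤ _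
      rw [map_add]
      exact add_le_add (le_Sabs f h1) (le_Sabs f h2)
    · exact add_nonneg (Sabs_nonneg f hu) (Sabs_nonneg f hv)
  · have key : ∀ y₁ y₂ : X, |y₁| ≤ u → |y₂| ≤ v → f y₁ + f y₂ ≤ Sabs f (u + v) := by
      intro y₁ y₂ h1 h2
      have h3 : |y₁ + y₂| ≤ u + v := (abs_add_le _ _).trans (add_le_add h1 h2)
      simpa [map_add] using le_Sabs f h3
    have step : ∀ y₁ : X, |y₁| ≤ u → Sabs f v ≤ Sabs f (u + v) - f y₁ := by
      intro y₁ h1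
      apply Real.sSup_le
      · rintro a ⟨y₂, h2, rfl⟩
        rw [le_sub_iff_add_le, add_comm]
        exact key y₁ y₂ h1 h2
      · rw [sub_nonneg]
        exact le_Sabs f (h1.trans (le_add_of_nonneg_right hv))
    have step2 : Sabs f u ≤ Sabs f (u + v) - Sabs f v := by
      apply Real.sSup_le
      · rintro a ⟨y₁, h1, rfl⟩
        have := step y₁ h1
        linarith
      · rw [sub_nonneg]
        exact Sabs_mono f hv (le_add_of_nonneg_left hu)
    linarith

noncomputable def gmod : X → ℝ := fun x => Sabs f x⁺ - Sabs f x⁻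

lemma gmod_diff {a b x : X} (ha : 0 ≤ a) (hb : 0 ≤ b) (hab : a - b = x) :
    gmod f x = Sabs f a - Sabs f b := by
  have hx : a - b = x⁺ - x⁻ := by rw [hab, posPart_sub_negPart]
  have h1 : a + x⁻ = x⁺ + b := sub_eq_sub_iff_add_eq_add.mp hx
  have h2 : Sabs f a + Sabs f x⁻ = Sabs f x⁺ + Sabs f b := by
    rw [← Sabs_add f ha (negPart_nonneg x), ← Sabs_add f (posPart_nonneg x) hb, h1]
  simp only [gmod]
  linarith

lemma gmod_add (x z : X) : gmod f (x + z) = gmod f x + gmod f z := by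
  have ha : (0 : X) ≤ x⁺ + z⁺ := add_nonneg (posPart_nonneg x) (posPart_nonneg z)
  have hb : (0 : X) ≤ x⁻ + z⁻ := add_nonneg (negPart_nonneg x) (negPart_nonneg z)
  have hab : (x⁺ + z⁺) - (x⁻ + z⁻) = x + z := by
    rw [show (x⁺ + z⁺) - (x⁻ + z⁻) = (x⁺ - x⁻) + (z⁺ - z⁻) from by abel,
      posPart_sub_negPart, posPart_sub_negPart]
  rw [gmod_diff f ha hb hab, Sabs_add f (posPart_nonneg x) (posPart_nonneg z),
    Sabs_add f (negPart_nonneg x) (negPart_nonneg z)]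
  simp only [gmod]
  ring

lemma norm_posPart_le' (x : X) : ‖x⁺‖ ≤ ‖x‖ := by
  refine HasSolidNorm.solid ?_
  rw [abs_of_nonneg (posPart_nonneg x)]
  calc x⁺ ≤ x⁺ + x⁻ := le_add_of_nonneg_right (negPart_nonneg x)
    _ = |x| := posPart_add_negPart x

lemma norm_negPart_le' (x : X) : ‖x⁻‖ ≤ ‖x‖ := by
  refine HasSolidNorm.solid ?_
  rw [abs_of_nonneg (negPart_nonneg x)]
  calc x⁻ ≤ x⁺ + x⁻ := le_add_of_nonneg_left (posPart_nonneg x)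
    _ = |x| := posPart_add_negPart x

lemma gmod_bound (x : X) : |gmod f x| ≤ 2 * ‖f‖ * ‖x‖ := by
  have h1 : Sabs f x⁺ ≤ ‖f‖ * ‖x‖ :=
    (Sabs_le f (posPart_nonneg x)).trans
      (mul_le_mul_of_nonneg_left (norm_posPart_le' x) (norm_nonneg f))
  have h2 : Sabs f x⁻ ≤ ‖f‖ * ‖x‖ :=
    (Sabs_le f (negPart_nonneg x)).trans
      (mul_le_mul_of_nonneg_left (norm_negPart_le' x) (norm_nonneg f))
  have h3 : 0 ≤ Sabs f x⁺ := Sabs_nonneg f (posPart_nonneg x)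
  have h4 : 0 ≤ Sabs f x⁻ := Sabs_nonneg f (negPart_nonneg x)
  rw [abs_le]
  constructor <;> simp only [gmod] <;> linarith

lemma gmod_sub (x y : X) : gmod f (x - y) = gmod f x - gmod f y := by
  have := gmod_add f (x - y) y
  rw [sub_add_cancel] at this
  linarith

lemma gmod_cont : Continuous (gmod f) := by
  have hlip : LipschitzWith (⟨2 * ‖f‖, by positivity⟩ : NNReal) (gmod f) := by
    apply LipschitzWith.of_dist_le_mul
    intro x y
    rw [Real.dist_eq, ← gmod_sub f x y]
    calc |gmod f (x - y)| ≤ 2 * ‖f‖ * ‖x - y‖ := gmod_bound f _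
      _ = (⟨2 * ‖f‖, by positivity⟩ : NNReal) * dist x y := by rw [dist_eq_norm]
  exact hlip.continuous

noncomputable def Gmod : X →L[ℝ] ℝ :=
  (AddMonoidHom.mk' (gmod f) (gmod_add f)).toRealLinearMap (gmod_cont f)

lemma Gmod_apply (x : X) : Gmod f x = gmod f x := rfl

lemma Sabs_zero : Sabs f 0 = 0 := by
  have hs : {y : X | |y| ≤ 0} = {0} := by
    ext y
    simp only [Set.mem_setOf_eq, Set.mem_singleton_iff]
    constructor
    · intro h
      have h1 : y ≤ 0 := (le_abs_self y).trans h
      have h2 : -y ≤ 0 := (neg_le_abs y).trans h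
      exact le_antisymm h1 (by simpa using h2)
    · rintro rfl; simp
  simp [Sabs, hs]

lemma pE_eq_Gmod_abs (x : X) : pE x f = Gmod f |x| := by
  rw [Gmod_apply]
  have h1 : (|x|)⁺ = |x| := posPart_eq_self.mpr (abs_nonneg x)
  have h2 : (|x|)⁻ = (0 : X) := negPart_eq_zero.mpr (abs_nonneg x)
  simp only [gmod, h1, h2, Sabs_zero, sub_zero]
  rfl

end aux

/-- If the lattice operations of `X` are weakly sequentially continuous,
then a sequentially p-continuous operator from `(X,p,ℝ^{X*})` to `(Y,‖·‖,ℝ)` is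
Dunford–Pettis. -/
theorem stmt_8 {X Y : Type*} [NormedAddCommGroup X] [Lattice X] [HasSolidNorm X] [IsOrderedAddMonoid X] [NormedSpace ℝ X]
    [NormedAddCommGroup Y] [NormedSpace ℝ Y]
    -- lattice operations are weakly sequentially continuous
    (hws : ∀ x : ℕ → X,
      (∀ f : X →L[ℝ] ℝ, Tendsto (fun n => f (x n)) atTop (𝓝 0)) →
      (∀ f : X →L[ℝ] ℝ, Tendsto (fun n => f |x n|) atTop (𝓝 0)))
    (T : X →ₗ[ℝ] Y)
    -- T is sequentially p-continuous
    (hT : ∀ x : ℕ → X, OConvSeq (fun n => pE (x n)) (0 : (X →L[ℝ] ℝ) → ℝ) →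
      Tendsto (fun n => ‖T (x n)‖) atTop (𝓝 0)) :
    -- T is Dunford–Pettis
    ∀ x : ℕ → X,
      (∀ f : X →L[ℝ] ℝ, Tendsto (fun n => f (x n)) atTop (𝓝 0)) →
      Tendsto (fun n => ‖T (x n)‖) atTop (𝓝 0) := by
  intro x hx
  apply hT
  have hconv : ∀ f : X →L[ℝ] ℝ, Tendsto (fun n => pE (x n) f) atTop (𝓝 0) := by
    intro f
    have h := hws x hx (Gmod f)
    refine h.congr fun n => ?_
    exact (pE_eq_Gmod_abs f (x n)).symm
  set q : ℕ → (X →L[ℝ] ℝ) → ℝ := fun n => pE (x n) with hq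
  have hbdd : ∀ f : X →L[ℝ] ℝ, BddAbove (Set.range fun n => |q n f|) := fun f =>
    ((hconv f).abs).bddAbove_range
  have hbdd' : ∀ (m : ℕ) (f : X →L[ℝ] ℝ),
      BddAbove (Set.range fun n : ℕ => |q (n + m) f|) := by
    intro m f
    refine (hbdd f).mono ?_
    rintro a ⟨n, rfl⟩
    exact ⟨n + m, rfl⟩
  refine ⟨ℕ, (· ≤ ·), fun m f => ⨆ n : ℕ, |q (n + m) f|, ⟨0⟩,
    fun a b => ⟨max a b, le_max_left _ _, le_max_right _ _⟩, ?_, ?_, ?_, ?_⟩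
  · -- antitone
    intro m₁ m₂ h12 f
    refine ciSup_le fun n => ?_
    have h := le_ciSup (hbdd' m₁ f) (n + (m₂ - m₁))
    have hidx : n + (m₂ - m₁) + m₁ = n + m₂ := by omega
    rwa [hidx] at h
  · -- nonneg
    intro m f
    exact le_trans (abs_nonneg (q (0 + m) f)) (le_ciSup (hbdd' m f) 0)
  · -- infimum is 0
    intro e he f
    by_contra hc
    push_neg at hc
    simp only [Pi.zero_apply] at hc
    obtain ⟨m, hm⟩ := (Metric.tendsto_atTop.mp (hconv f)) (e f / 2) (by linarith)
    have hz : (⨆ n : ℕ, |q (n + m) f|) ≤ e f / 2 := by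
      refine ciSup_le fun n => ?_
      have := hm (n + m) (by omega)
      rw [Real.dist_eq, sub_zero] at this
      exact this.le
    have := (he m f).trans hz
    linarith
  · -- domination
    intro m
    refine ⟨m, fun n hn f => ?_⟩
    have h1 : |q n - 0| f = |q n f| := by
      simp [Pi.abs_apply]
    rw [h1]
    have h := le_ciSup (hbdd' m f) (n - m)
    have hidx : n - m + m = n := by omega
    rwa [hidx] at h
end

section
/- Let (X,p,E) be an LNS with E a normed lattice, and (Y,m,F) an LNS with F a Banach lattice. If T: X → Y is compact as an operator between the mixed-normed spaces (X,‖p(·)‖_E) → (Y,‖m(·)‖_F), then T is sequentially p-compact: every p-bounded sequence xₙ in X has a subsequence x_{n_k} with m(Tx_{n_k} − y) order-converging to 0 in F for some y ∈ Y. -/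
open Filter Topology

/-- An operator compact between the mixed-normed spaces is sequentially
p-compact. -/
theorem stmt_12 {X E Y F : Type*} [AddCommGroup X] [Module ℝ X]
    [NormedAddCommGroup E] [Lattice E] [HasSolidNorm E] [IsOrderedAddMonoid E] [NormedSpace ℝ E]
    [AddCommGroup Y] [Module ℝ Y]
    [NormedAddCommGroup F] [Lattice F] [HasSolidNorm F] [IsOrderedAddMonoid F] [NormedSpace ℝ F] [CompleteSpace F]
    (p : X → E) (hp : IsVectorNorm p)
    (m : Y → F) (hm : IsVectorNorm m)
    (T : X →ₗ[ℝ] Y)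
    -- T is compact for the mixed norms
    (hcpt : ∀ x : ℕ → X, (∃ C : ℝ, ∀ n, ‖p (x n)‖ ≤ C) →
      ∃ (φ : ℕ → ℕ) (y : Y), StrictMono φ ∧
        Tendsto (fun k => ‖m (T (x (φ k)) - y)‖) atTop (𝓝 0)) :
    -- T is sequentially p-compact
    ∀ x : ℕ → X, (∃ e : E, ∀ n, p (x n) ≤ e) →
      ∃ (φ : ℕ → ℕ) (y : Y), StrictMono φ ∧
        OConvSeq (fun k => m (T (x (φ k)) - y)) 0 := by
  intro x ⟨e, he⟩
  obtain ⟨φ, y, hφ, hten⟩ := hcpt x ⟨‖e‖, fun n => HasSolidNorm.solid (by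
    rw [abs_of_nonneg (hp.nonneg _)]
    exact (he n).trans (le_abs_self e))⟩
  -- extract a subsequence with geometric norm decay
  obtain ⟨ψ, hψ, hgeo⟩ := Filter.extraction_forall_of_eventually'
    (P := fun n k => ‖m (T (x (φ k)) - y)‖ ≤ (1/2:ℝ)^n)
    (fun n => by
      have := (Metric.tendsto_atTop.mp hten ((1/2:ℝ)^n) (by positivity))
      obtain ⟨N, hN⟩ := this
      exact ⟨N, fun k hk => by
        have := hN k hk
        rw [Real.dist_eq, sub_zero, abs_of_nonneg (norm_nonneg _)] at this
        exact this.le⟩)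
  set a : ℕ → F := fun k => m (T (x (φ (ψ k))) - y) with ha_def
  have hann : ∀ k, 0 ≤ a k := fun k => hm.nonneg _
  have hsum : Summable a :=
    Summable.of_norm_bounded (summable_geometric_of_lt_one (by norm_num) (by norm_num)) hgeo
  have hsum' : ∀ b, Summable fun k => a (k + b) := fun b => (summable_nat_add_iff b).2 hsum
  set z : ℕ → F := fun b => ∑' k, a (k + b) with hz_def
  have hznn : ∀ b, 0 ≤ z b := fun b => tsum_nonneg fun k => hann _
  have hzsucc : ∀ b, z (b + 1) ≤ z b := by
    intro b
    have : z b = a (0 + b) + ∑' k, a (k + 1 + b) := Summable.tsum_eq_zero_add (hsum' b)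
    rw [this]
    have : (fun k => a (k + 1 + b)) = fun k => a (k + (b + 1)) := by
      funext k; ring_nf
    rw [this]
    exact le_add_of_nonneg_left (hann _)
  have hzanti : Antitone z := antitone_nat_of_succ_le hzsucc
  have hz0 : Tendsto z atTop (𝓝 0) := tendsto_sum_nat_add a
  refine ⟨φ ∘ ψ, y, hφ.comp hψ, ℕ, (· ≤ ·), z, ⟨0⟩,
    fun i j => ⟨max i j, le_max_left _ _, le_max_right _ _⟩,
    fun b₁ b₂ h => hzanti h, hznn,
    fun c hc => ge_of_tendsto' hz0 hc, ?_⟩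
  intro b
  refine ⟨b, fun j hj => ?_⟩
  have h1 : |m (T (x ((φ ∘ ψ) j)) - y) - 0| = a j := by
    rw [sub_zero]; exact abs_of_nonneg (hann j)
  rw [h1]
  have : a j = a ((j - b) + b) := by rw [Nat.sub_add_cancel hj]
  rw [this]
  exact Summable.le_tsum (hsum' b) (j - b) fun i _ => hann _
end

section
/- Let (X,p,E) be an LNS with E an AM-space with strong unit, and (Y,m,F) an LNS with F an order continuous normed lattice. If T: X → Y is sequentially p-compact, then T is compact between the mixed-normed spaces (X,‖p(·)‖_E) and (Y,‖m(·)‖_F). -/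
open Filter Topology

/-- A sequentially p-compact operator (E an AM-space with strong unit,
F order continuous) is compact for the mixed norms. -/
theorem stmt_13 {X E Y F : Type*} [AddCommGroup X] [Module ℝ X]
    [NormedAddCommGroup E] [Lattice E] [HasSolidNorm E] [IsOrderedAddMonoid E] [NormedSpace ℝ E]
    [AddCommGroup Y] [Module ℝ Y]
    [NormedAddCommGroup F] [Lattice F] [HasSolidNorm F] [IsOrderedAddMonoid F] [NormedSpace ℝ F]
    (p : X → E) (hp : IsVectorNorm p)
    (m : Y → F) (hm : IsVectorNorm m)
    -- E is an AM-space with strong unit e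
    (e : E) (he : 0 ≤ e)
    (hAM : ∀ (z : E) (l : ℝ), 0 ≤ l → (‖z‖ ≤ l ↔ |z| ≤ l • e))
    -- F is order continuous: order convergence implies norm convergence
    (hF : ∀ (f : ℕ → F) (l : F), OConvSeq f l → Tendsto (fun n => ‖f n - l‖) atTop (𝓝 0))
    (T : X →ₗ[ℝ] Y)
    -- T is sequentially p-compact
    (hcpt : ∀ x : ℕ → X, (∃ e' : E, ∀ n, p (x n) ≤ e') →
      ∃ (φ : ℕ → ℕ) (y : Y), StrictMono φ ∧
        OConvSeq (fun k => m (T (x (φ k)) - y)) 0) :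
    -- T is compact for the mixed norms
    ∀ x : ℕ → X, (∃ C : ℝ, ∀ n, ‖p (x n)‖ ≤ C) →
      ∃ (φ : ℕ → ℕ) (y : Y), StrictMono φ ∧
        Tendsto (fun k => ‖m (T (x (φ k)) - y)‖) atTop (𝓝 0) := by
  intro x ⟨C, hC⟩
  obtain ⟨φ, y, hφ, hconv⟩ := hcpt x ⟨(max C 0) • e, fun n => by
    have h1 : ‖p (x n)‖ ≤ max C 0 := (hC n).trans (le_max_left _ _)
    have := (hAM (p (x n)) (max C 0) (le_max_right _ _)).mp h1
    rwa [abs_of_nonneg (hp.nonneg _)] at this⟩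
  refine ⟨φ, y, hφ, ?_⟩
  simpa using hF _ 0 hconv
end
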